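/- Let ℓ_1, …, ℓ_N : ℝ^D → ℝ be twice continuously differentiable functions, let θ : ℝ^N → ℝ^D be differentiable at the all-ones vector 1 ∈ ℝ^N and satisfy ∑_{n=1}^N w_n ∇ℓ_n(θ(w)) = 0 for all w in a neighborhood of 1, and let H = ∑_{n=1}^N ∇²ℓ_n(θ(1)) be invertible. Let M : ℝ^D → ℝ be differentiable at θ̂ = θ(1). Then for every n, the derivative of the composite w ↦ M(θ(w)) with respect to the n-th weight at w = 1 equals −∇M(θ̂)ᵀ H^{-1} g_n, where g_n = ∇ℓ_n(θ̂). (Influence of a training instance on a differentiable functional, Equation (5).) -/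

import Mathlib

open RealInnerProductSpace

/-- Influence of a training instance on a differentiable functional
(Equation (5)): under the weighted stationarity condition and invertibility of
the Hessian `H = ∑ n, ∇²ℓ n (θ 1)`, for any functional `M` differentiable at
`θ̂ = θ 1`, the derivative of `w ↦ M (θ w)` with respect to the `n`-th weight
at `w = 1` equals `-⟪∇M(θ̂), H⁻¹ g n⟫` where `g n = ∇ℓ n (θ̂)`. -/
theorem influence_on_functional_formula
    (D N : ℕ) (hN : 0 < N)
    (ℓ : Fin N → EuclideanSpace ℝ (Fin D) → ℝ)
    (hℓ : ∀ n, ContDiff ℝ 2 (ℓ n))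
    (θ : (Fin N → ℝ) → EuclideanSpace ℝ (Fin D))
    (hθ : DifferentiableAt ℝ θ 1)
    (hstat : ∀ᶠ w in nhds (1 : Fin N → ℝ),
      ∑ n, w n • gradient (ℓ n) (θ w) = 0)
    (H Hinv : EuclideanSpace ℝ (Fin D) →L[ℝ] EuclideanSpace ℝ (Fin D))
    (hH : H = ∑ n, fderiv ℝ (gradient (ℓ n)) (θ 1))
    (hHinv₁ : H.comp Hinv = ContinuousLinearMap.id ℝ (EuclideanSpace ℝ (Fin D)))
    (hHinv₂ : Hinv.comp H = ContinuousLinearMap.id ℝ (EuclideanSpace ℝ (Fin D)))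
    (M : EuclideanSpace ℝ (Fin D) → ℝ)
    (hM : DifferentiableAt ℝ M (θ 1)) :
    ∀ n : Fin N, fderiv ℝ (fun w => M (θ w)) 1 (Pi.single n 1) =
      -⟪gradient M (θ 1), Hinv (gradient (ℓ n) (θ 1))⟫ := by
  intro n
  -- differentiability of the gradients
  have hgrad : ∀ m : Fin N, DifferentiableAt ℝ (gradient (ℓ m)) (θ 1) := by
    intro m
    have h1 : ContDiff ℝ 1 (fderiv ℝ (ℓ m)) := (hℓ m).fderiv_right (by norm_num)
    have heq : gradient (ℓ m) =
        fun x => (InnerProductSpace.toDual ℝ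
            (EuclideanSpace ℝ (Fin D))).symm.toContinuousLinearEquiv.toContinuousLinearMap
          (fderiv ℝ (ℓ m) x) := rfl
    rw [heq]
    exact ((InnerProductSpace.toDual ℝ
        (EuclideanSpace ℝ (Fin D))).symm.toContinuousLinearEquiv.toContinuousLinearMap
      |>.differentiable.differentiableAt).comp _ ((h1.differentiable (by norm_num)).differentiableAt)
  set Dθ := fderiv ℝ θ 1 with hDθ
  set g : Fin N → EuclideanSpace ℝ (Fin D) := fun m => gradient (ℓ m) (θ 1) with hg
  set Hm : Fin N → (EuclideanSpace ℝ (Fin D) →L[ℝ] EuclideanSpace ℝ (Fin D)) :=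
    fun m => fderiv ℝ (gradient (ℓ m)) (θ 1) with hHm
  -- derivative of each term
  have hterm : ∀ m : Fin N, HasFDerivAt (fun w : Fin N → ℝ => w m • gradient (ℓ m) (θ w))
      ((1 : Fin N → ℝ) m • ((Hm m).comp Dθ)
        + (ContinuousLinearMap.proj m : (Fin N → ℝ) →L[ℝ] ℝ).smulRight (g m))
      1 := by
    intro m
    have hc : HasFDerivAt (fun w : Fin N → ℝ => w m)
        (ContinuousLinearMap.proj m : (Fin N → ℝ) →L[ℝ] ℝ) 1 :=
      (ContinuousLinearMap.proj m : (Fin N → ℝ) →L[ℝ] ℝ).hasFDerivAt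
    have hf : HasFDerivAt (fun w : Fin N → ℝ => gradient (ℓ m) (θ w)) ((Hm m).comp Dθ) 1 :=
      ((hgrad m).hasFDerivAt).comp 1 hθ.hasFDerivAt
    exact hc.smul hf
  have hsum : HasFDerivAt (fun w : Fin N → ℝ => ∑ m, w m • gradient (ℓ m) (θ w))
      (∑ m, ((1 : Fin N → ℝ) m • ((Hm m).comp Dθ)
        + (ContinuousLinearMap.proj m : (Fin N → ℝ) →L[ℝ] ℝ).smulRight (g m)))
      1 :=
    HasFDerivAt.fun_sum (fun m _ => hterm m)
  have hF0 : fderiv ℝ (fun w : Fin N → ℝ => ∑ m, w m • gradient (ℓ m) (θ w)) 1 = 0 := by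
    have hfe : (fun w : Fin N → ℝ => ∑ m, w m • gradient (ℓ m) (θ w))
        =ᶠ[nhds (1 : Fin N → ℝ)] (fun _ => (0 : EuclideanSpace ℝ (Fin D))) := hstat
    rw [hfe.fderiv_eq, fderiv_fun_const]
    rfl
  have hL0 : (∑ m, ((1 : Fin N → ℝ) m • ((Hm m).comp Dθ)
      + (ContinuousLinearMap.proj m : (Fin N → ℝ) →L[ℝ] ℝ).smulRight (g m)))
      = 0 := by
    rw [← hsum.fderiv, hF0]
  -- apply to the basis vector
  set e : Fin N → ℝ := Pi.single n 1 with he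
  have happ : H (Dθ e) + g n = 0 := by
    have h := congrArg (fun L : (Fin N → ℝ) →L[ℝ] EuclideanSpace ℝ (Fin D) => L e) hL0
    simp only [ContinuousLinearMap.sum_apply, ContinuousLinearMap.add_apply,
      ContinuousLinearMap.smul_apply, ContinuousLinearMap.coe_comp', Function.comp_apply,
      ContinuousLinearMap.smulRight_apply, ContinuousLinearMap.proj_apply,
      ContinuousLinearMap.zero_apply, Pi.one_apply, one_smul] at h
    rw [Finset.sum_add_distrib] at h
    have h1 : ∑ m, (Hm m) (Dθ e) = H (Dθ e) := by
      rw [hH]; simp [ContinuousLinearMap.sum_apply, hHm]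
    have h2 : ∑ m, e m • g m = g n := by
      rw [he, Finset.sum_eq_single n]
      · simp
      · intro m _ hm
        simp [Pi.single_apply, hm]
      · intro h'; exact absurd (Finset.mem_univ n) h'
    rw [h1, h2] at h
    exact h
  have hDθe : Dθ e = -Hinv (g n) := by
    have h3 : H (Dθ e) = -g n := by
      have := happ
      linear_combination (norm := module) this
    have h4 : Hinv (H (Dθ e)) = Dθ e := by
      have := congrArg (fun L : EuclideanSpace ℝ (Fin D) →L[ℝ] EuclideanSpace ℝ (Fin D) =>
        L (Dθ e)) hHinv₂
      simpa using this
    rw [h3] at h4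
    rw [← h4, map_neg]
  -- chain rule for M ∘ θ
  have hchain : fderiv ℝ (fun w => M (θ w)) 1 = (fderiv ℝ M (θ 1)).comp Dθ :=
    fderiv_comp 1 hM hθ
  rw [hchain]
  show fderiv ℝ M (θ 1) (Dθ e) = _
  rw [hDθe, map_neg]
  congr 1
  have : ⟪gradient M (θ 1), Hinv (g n)⟫ = fderiv ℝ M (θ 1) (Hinv (g n)) := by
    rw [gradient]
    exact InnerProductSpace.toDual_symm_apply
  rw [← this]
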